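/- Let α > 1 be a real number and let T : (0,1] → (0,1] be the map defined by T(x) = (α^d x − 1)/(α − 1) for x ∈ (α^{-d}, α^{-(d-1)}] (d a positive integer). Then Lebesgue measure restricted to (0,1] is ergodic with respect to T: it is T-invariant, and every Borel set B ⊆ (0,1] with T^{-1}(B) = B has Lebesgue measure 0 or 1. -/

import Mathlib

open MeasureTheory Set

lemma vol_affine_image (c d : ℝ) (hc : 0 < c) (A : Set ℝ) :
    volume ((fun x => c * x + d) '' A) = ENNReal.ofReal c * volume A := by
  have h1 : (fun x => c * x + d) '' A = (fun y => c⁻¹ * (y - d)) ⁻¹' A := by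
    ext y
    simp only [Set.mem_image, Set.mem_preimage]
    constructor
    · rintro ⟨x, hx, rfl⟩
      have : c⁻¹ * (c * x + d - d) = x := by field_simp; ring
      rwa [this]
    · intro h
      exact ⟨c⁻¹ * (y - d), h, by field_simp; ring⟩
  have h2 : (fun y : ℝ => c⁻¹ * (y - d)) = (fun y => c⁻¹ * y) ∘ (fun y => y + (-d)) := by
    ext y; simp [mul_sub, sub_eq_add_neg, mul_add]
  rw [h1, h2, Set.preimage_comp, measure_preimage_add_right,
    Real.volume_preimage_mul_left (by positivity : c⁻¹ ≠ 0)]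
  simp [abs_of_pos hc]

noncomputable def cc (α : ℝ) (n : ℕ) : ℝ := (α - 1) * α ^ (-(n + 1 : ℕ) : ℤ)
noncomputable def dd (α : ℝ) (n : ℕ) : ℝ := α ^ (-(n + 1 : ℕ) : ℤ)
noncomputable def psi (α : ℝ) (n : ℕ) : ℝ → ℝ := fun y => cc α n * y + dd α n
def JJ (α : ℝ) (n : ℕ) : Set ℝ := Set.Ioc (α ^ (-(n + 1 : ℕ) : ℤ)) (α ^ (-(n : ℕ) : ℤ))

section
variable {α : ℝ} (hα : 1 < α)
include hα

lemma apos : 0 < α := lt_trans one_pos hα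
lemma cc_pos (n : ℕ) : 0 < cc α n := mul_pos (by linarith) (zpow_pos (apos hα) _)

lemma psi_image_Ioc (n : ℕ) (a b : ℝ) :
    psi α n '' Set.Ioc a b = Set.Ioc (psi α n a) (psi α n b) :=
  Set.image_affine_Ioc (cc_pos hα n) _ a b

lemma psi_inj (n : ℕ) : Function.Injective (psi α n) := by
  intro x y h
  have hc := cc_pos hα n
  simp only [psi] at h
  nlinarith [h]

lemma psi_image_unit (n : ℕ) : psi α n '' Set.Ioc 0 1 = JJ α n := by
  rw [psi_image_Ioc hα]
  have h1 : psi α n 0 = α ^ (-(n + 1 : ℕ) : ℤ) := by simp [psi, dd]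
  have h2 : psi α n 1 = α ^ (-(n : ℕ) : ℤ) := by
    simp only [psi, cc, dd, mul_one]
    rw [← add_one_mul]
    rw [show (α - 1) + 1 = α by ring]
    rw [show (-(n + 1 : ℕ) : ℤ) = (-(n : ℕ) : ℤ) - 1 by push_cast; ring]
    rw [zpow_sub_one₀ (ne_of_gt (apos hα))]
    field_simp
  rw [h1, h2]; rfl

lemma vol_psi_image (n : ℕ) (A : Set ℝ) :
    volume (psi α n '' A) = ENNReal.ofReal (cc α n) * volume A :=
  vol_affine_image _ _ (cc_pos hα n) A

lemma JJ_subset_unit (n : ℕ) : JJ α n ⊆ Set.Ioc 0 1 := by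
  intro x hx
  obtain ⟨h1, h2⟩ := hx
  constructor
  · exact lt_trans (zpow_pos (apos hα) _) h1
  · exact le_trans h2 (zpow_le_one_of_nonpos₀ (le_of_lt hα) (by simp))

lemma JJ_disjoint : Pairwise (Function.onFun Disjoint (JJ α)) := by
  intro m n hmn
  wlog h : m < n generalizing m n
  · exact (this hmn.symm (by omega)).symm
  apply Set.disjoint_left.2
  rintro x ⟨hx1, _⟩ ⟨_, hx4⟩
  have hle : α ^ (-(n : ℕ) : ℤ) ≤ α ^ (-(m + 1 : ℕ) : ℤ) := by
    apply zpow_le_zpow_right₀ (le_of_lt hα)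
    push_cast; omega
  linarith
lemma JJ_cover {x : ℝ} (hx : x ∈ Set.Ioc (0:ℝ) 1) : ∃ n, x ∈ JJ α n := by
  obtain ⟨hx1, hx2⟩ := hx
  have hinv : α⁻¹ < 1 := by rw [inv_lt_one_iff₀]; right; exact hα
  have h0 : ∃ m : ℕ, α ^ (-(m : ℕ) : ℤ) < x := by
    obtain ⟨m, hm⟩ := exists_pow_lt_of_lt_one hx1 hinv
    refine ⟨m, ?_⟩
    rw [zpow_neg, zpow_natCast, ← inv_pow]
    exact hm
  classical
  let k := Nat.find h0
  have hk : α ^ (-(k : ℕ) : ℤ) < x := Nat.find_spec h0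
  have hkpos : k ≠ 0 := by
    intro h
    have := hk
    rw [h] at this
    simp only [Nat.cast_zero, neg_zero, zpow_zero] at this
    linarith
  refine ⟨k - 1, ?_, ?_⟩
  · show α ^ (-(k - 1 + 1 : ℕ) : ℤ) < x
    rw [show k - 1 + 1 = k by omega]
    exact hk
  · by_contra h
    push_neg at h
    exact Nat.find_min h0 (show k - 1 < k by omega) h

variable (T : ℝ → ℝ)
  (hT : ∀ e : ℕ, 1 ≤ e →
      ∀ x ∈ Set.Ioc (α ^ (-(e : ℤ))) (α ^ (-(e : ℤ) + 1)),
        T x = (α ^ (e : ℤ) * x - 1) / (α - 1))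
include hT

lemma T_on_JJ {n : ℕ} {x : ℝ} (hx : x ∈ JJ α n) :
    T x = (α ^ ((n:ℤ) + 1) * x - 1) / (α - 1) := by
  have hx' : x ∈ Set.Ioc (α ^ (-((n + 1 : ℕ) : ℤ))) (α ^ (-((n + 1 : ℕ) : ℤ) + 1)) := by
    have e : (-((n + 1 : ℕ) : ℤ) + 1) = (-(n : ℕ) : ℤ) := by push_cast; ring
    rw [e]; exact hx
  have := hT (n + 1) (by omega) x hx'
  rw [this]
  norm_cast

lemma T_psi {n : ℕ} {y : ℝ} (hy : y ∈ Set.Ioc (0:ℝ) 1) : T (psi α n y) = y := by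
  have hmem : psi α n y ∈ JJ α n := by
    rw [← psi_image_unit hα]
    exact Set.mem_image_of_mem _ hy
  rw [T_on_JJ hα T hT hmem]
  simp only [psi, cc, dd]
  have hne : α ≠ 0 := ne_of_gt (apos hα)
  have hpow : α ^ ((n:ℤ) + 1) * α ^ (-(n + 1 : ℕ) : ℤ) = 1 := by
    rw [← zpow_add₀ hne, show ((n:ℤ) + 1) + (-(n + 1 : ℕ) : ℤ) = 0 by push_cast; ring,
      zpow_zero]
  have : α ^ ((n:ℤ) + 1) * ((α - 1) * α ^ (-(n + 1 : ℕ) : ℤ) * y + α ^ (-(n + 1 : ℕ) : ℤ))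
      = (α - 1) * y + 1 := by
    have e1 : α ^ ((n:ℤ) + 1) * ((α - 1) * α ^ (-(n + 1 : ℕ) : ℤ) * y + α ^ (-(n + 1 : ℕ) : ℤ))
        = (α ^ ((n:ℤ) + 1) * α ^ (-(n + 1 : ℕ) : ℤ)) * ((α - 1) * y) +
          α ^ ((n:ℤ) + 1) * α ^ (-(n + 1 : ℕ) : ℤ) := by ring
    rw [e1, hpow]; ring
  rw [this, add_sub_cancel_right, mul_comm, mul_div_assoc,
    div_self (by linarith : α - 1 ≠ 0), mul_one]

lemma branch_preimage {B : Set ℝ} (hB : B ⊆ Set.Ioc 0 1) (n : ℕ) :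
    JJ α n ∩ T ⁻¹' B = psi α n '' B := by
  ext x
  constructor
  · rintro ⟨hxJ, hxB⟩
    refine ⟨T x, hxB, ?_⟩
    -- x = psi n (T x)
    obtain ⟨y, hy, hxy⟩ : x ∈ psi α n '' Set.Ioc 0 1 := by
      rw [psi_image_unit hα]; exact hxJ
    have : T x = y := by rw [← hxy, T_psi hα T hT hy]
    rw [this, hxy]
  · rintro ⟨y, hyB, rfl⟩
    have hy1 := hB hyB
    constructor
    · rw [← psi_image_unit hα]; exact Set.mem_image_of_mem _ hy1
    · show T (psi α n y) ∈ B
      rw [T_psi hα T hT hy1]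
      exact hyB

omit hT in
lemma meas_psi_image {B : Set ℝ} (hB : MeasurableSet B) (n : ℕ) :
    MeasurableSet (psi α n '' B) := by
  have hc := cc_pos hα n
  have h1 : psi α n '' B = (fun y => (cc α n)⁻¹ * (y - dd α n)) ⁻¹' B := by
    ext y
    simp only [Set.mem_image, Set.mem_preimage, psi]
    constructor
    · rintro ⟨x, hx, rfl⟩
      have : (cc α n)⁻¹ * (cc α n * x + dd α n - dd α n) = x := by field_simp; ring
      rwa [this]
    · intro h
      exact ⟨(cc α n)⁻¹ * (y - dd α n), h, by field_simp; ring⟩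
  rw [h1]
  exact hB.preimage (by fun_prop)

lemma decomp_preimage {B : Set ℝ} (hB : B ⊆ Set.Ioc 0 1) :
    Set.Ioc (0:ℝ) 1 ∩ T ⁻¹' B = ⋃ n, psi α n '' B := by
  ext x
  simp only [Set.mem_inter_iff, Set.mem_iUnion, Set.mem_preimage]
  constructor
  · rintro ⟨hx1, hx2⟩
    obtain ⟨n, hn⟩ := JJ_cover hα hx1
    refine ⟨n, ?_⟩
    rw [← branch_preimage hα T hT hB n]
    exact ⟨hn, hx2⟩
  · rintro ⟨n, hn⟩
    rw [← branch_preimage hα T hT hB n] at hn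
    exact ⟨JJ_subset_unit hα n hn.1, hn.2⟩

omit hT in
lemma tsum_cc : ∑' n : ℕ, ENNReal.ofReal (cc α n) = 1 := by
  have h0 : (0:ℝ) < α := apos hα
  have hcc : ∀ n : ℕ, cc α n = ((α - 1) * α⁻¹) * α⁻¹ ^ n := by
    intro n
    simp only [cc]
    rw [show (-(n + 1 : ℕ) : ℤ) = -1 + (-(n:ℕ)) by push_cast; ring, zpow_add₀ (ne_of_gt h0),
      zpow_neg, zpow_one, zpow_neg, zpow_natCast, inv_pow]
    ring
  have hr : ENNReal.ofReal α⁻¹ < 1 := by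
    rw [ENNReal.ofReal_lt_one]
    rw [inv_lt_one_iff₀]; right; exact hα
  calc ∑' n : ℕ, ENNReal.ofReal (cc α n)
      = ∑' n : ℕ, ENNReal.ofReal ((α - 1) * α⁻¹) * (ENNReal.ofReal α⁻¹) ^ n := by
        congr 1; ext n
        rw [hcc n, ENNReal.ofReal_mul (mul_nonneg (by linarith) (by positivity)), ENNReal.ofReal_pow (by positivity)]
    _ = ENNReal.ofReal ((α - 1) * α⁻¹) * (1 - ENNReal.ofReal α⁻¹)⁻¹ := by
        rw [ENNReal.tsum_mul_left, ENNReal.tsum_geometric]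
    _ = 1 := by
        have e1 : (1 : ENNReal) - ENNReal.ofReal α⁻¹ = ENNReal.ofReal ((α - 1) * α⁻¹) := by
          rw [← ENNReal.ofReal_one, ← ENNReal.ofReal_sub _ (by positivity)]
          congr 1; field_simp
        rw [e1, ENNReal.mul_inv_cancel
          (ne_of_gt (ENNReal.ofReal_pos.2 (mul_pos (by linarith) (by positivity))))
          ENNReal.ofReal_ne_top]

lemma vol_preimage_eq {B : Set ℝ} (hBm : MeasurableSet B) (hB : B ⊆ Set.Ioc 0 1) :
    volume (Set.Ioc (0:ℝ) 1 ∩ T ⁻¹' B) = volume B := by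
  rw [decomp_preimage hα T hT hB]
  rw [measure_iUnion ?_ (fun n => meas_psi_image hα hBm n)]
  · calc ∑' n : ℕ, volume (psi α n '' B)
        = ∑' n : ℕ, ENNReal.ofReal (cc α n) * volume B := by
          congr 1; ext n; exact vol_psi_image hα n B
      _ = (∑' n : ℕ, ENNReal.ofReal (cc α n)) * volume B := by rw [ENNReal.tsum_mul_right]
      _ = volume B := by rw [tsum_cc hα, one_mul]
  · intro m n hmn
    have := JJ_disjoint hα hmn
    apply Set.disjoint_of_subset ?_ ?_ this
    · rw [← psi_image_unit hα]; exact Set.image_mono hB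
    · rw [← psi_image_unit hα]; exact Set.image_mono hB

end

def cyl (α : ℝ) : List ℕ → Set ℝ
  | [] => Set.Ioc 0 1
  | n :: w => psi α n '' cyl α w

section
variable {α : ℝ} (hα : 1 < α)
include hα

lemma cyl_subset_unit (w : List ℕ) : cyl α w ⊆ Set.Ioc 0 1 := by
  induction w with
  | nil => exact le_refl _
  | cons n w ih =>
    show psi α n '' cyl α w ⊆ _
    calc psi α n '' cyl α w ⊆ psi α n '' Set.Ioc 0 1 := Set.image_mono ih
      _ = JJ α n := psi_image_unit hα n
      _ ⊆ Set.Ioc 0 1 := JJ_subset_unit hα n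

lemma cyl_Ioc (w : List ℕ) : ∃ a b : ℝ, a < b ∧ cyl α w = Set.Ioc a b ∧
    b - a ≤ (1 - α⁻¹) ^ w.length := by
  have h0 : (0:ℝ) < α := apos hα
  induction w with
  | nil => exact ⟨0, 1, one_pos, rfl, by simp⟩
  | cons n w ih =>
    obtain ⟨a, b, hab, hw, hlen⟩ := ih
    refine ⟨psi α n a, psi α n b, ?_, ?_, ?_⟩
    · simp only [psi]
      have := cc_pos hα n
      nlinarith
    · show psi α n '' cyl α w = _
      rw [hw, psi_image_Ioc hα]
    · have : psi α n b - psi α n a = cc α n * (b - a) := by simp only [psi]; ring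
      rw [this]
      have hcc_le : cc α n ≤ 1 - α⁻¹ := by
        have h1 : (1 : ℝ) - α⁻¹ = (α - 1) * α ^ (-(1:ℤ)) := by
          rw [zpow_neg, zpow_one]; field_simp
        rw [h1]
        apply mul_le_mul_of_nonneg_left _ (by linarith)
        apply zpow_le_zpow_right₀ (le_of_lt hα)
        push_cast; omega
      calc cc α n * (b - a) ≤ (1 - α⁻¹) * (1 - α⁻¹) ^ w.length := by
            apply mul_le_mul hcc_le hlen (by linarith) ?_
            have hi : α⁻¹ < 1 := by rw [inv_lt_one_iff₀]; right; exact hα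
            linarith
        _ = (1 - α⁻¹) ^ (n :: w).length := by rw [List.length_cons]; ring

lemma cyl_measurable (w : List ℕ) : MeasurableSet (cyl α w) := by
  obtain ⟨a, b, _, hw, _⟩ := cyl_Ioc hα w
  rw [hw]; exact measurableSet_Ioc

lemma cyl_exists {x : ℝ} (hx : x ∈ Set.Ioc (0:ℝ) 1) (N : ℕ) :
    ∃ w : List ℕ, w.length = N ∧ x ∈ cyl α w := by
  induction N generalizing x with
  | zero => exact ⟨[], rfl, hx⟩
  | succ N ih =>
    obtain ⟨n, hn⟩ := JJ_cover hα hx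
    rw [← psi_image_unit hα] at hn
    obtain ⟨y, hy, rfl⟩ := hn
    obtain ⟨w, hwl, hwm⟩ := ih hy
    exact ⟨n :: w, by simp [hwl], Set.mem_image_of_mem _ hwm⟩

lemma cyl_mono {w v : List ℕ} (h : w <+: v) : cyl α v ⊆ cyl α w := by
  induction w generalizing v with
  | nil => exact cyl_subset_unit hα v
  | cons n w ih =>
    obtain ⟨t, rfl⟩ := h
    show cyl α (n :: (w ++ t)) ⊆ cyl α (n :: w)
    exact Set.image_mono (ih ⟨t, rfl⟩)

lemma cyl_nested {w v : List ℕ} (h : ¬ Disjoint (cyl α w) (cyl α v)) :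
    w <+: v ∨ v <+: w := by
  induction w generalizing v with
  | nil => exact Or.inl (List.nil_prefix)
  | cons n w ih =>
    cases v with
    | nil => exact Or.inr (List.nil_prefix)
    | cons m v =>
      obtain ⟨x, hx1, hx2⟩ := Set.not_disjoint_iff.1 h
      have hnm : n = m := by
        by_contra hne
        have hd := JJ_disjoint hα (show n ≠ m from hne)
        have h1 : x ∈ JJ α n := by
          rw [← psi_image_unit hα]
          exact Set.image_mono (cyl_subset_unit hα w) hx1
        have h2 : x ∈ JJ α m := by
          rw [← psi_image_unit hα]
          exact Set.image_mono (cyl_subset_unit hα v) hx2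
        exact Set.disjoint_left.1 hd h1 h2
      subst hnm
      obtain ⟨y, hy, hxy⟩ := hx1
      obtain ⟨z, hz, hxz⟩ := hx2
      have : y = z := psi_inj hα n (hxy.trans hxz.symm)
      subst this
      have := ih (v := v) (Set.not_disjoint_iff.2 ⟨y, hy, hz⟩)
      rcases this with h | h
      · exact Or.inl ((List.prefix_cons_inj n).2 h)
      · exact Or.inr ((List.prefix_cons_inj n).2 h)
end

section
variable {α : ℝ} (hα : 1 < α) (T : ℝ → ℝ)
  (hT : ∀ e : ℕ, 1 ≤ e →
      ∀ x ∈ Set.Ioc (α ^ (-(e : ℤ))) (α ^ (-(e : ℤ) + 1)),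
        T x = (α ^ (e : ℤ) * x - 1) / (α - 1))
  {B : Set ℝ} (hB : B ⊆ Set.Ioc 0 1) (hinv : Set.Ioc (0:ℝ) 1 ∩ T ⁻¹' B = B)
include hα hT hB hinv

lemma step_inter {A : Set ℝ} (hA : A ⊆ Set.Ioc 0 1) (n : ℕ) :
    B ∩ (psi α n '' A) = psi α n '' (B ∩ A) := by
  ext x
  constructor
  · rintro ⟨hxB, y, hyA, rfl⟩
    have hy1 := hA hyA
    have hTx : T (psi α n y) = y := T_psi hα T hT hy1
    have hxB' : y ∈ B := by
      have : psi α n y ∈ Set.Ioc (0:ℝ) 1 ∩ T ⁻¹' B := by rw [hinv]; exact hxB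
      rw [Set.mem_inter_iff, Set.mem_preimage, hTx] at this
      exact this.2
    exact ⟨y, ⟨hxB', hyA⟩, rfl⟩
  · rintro ⟨y, ⟨hyB, hyA⟩, rfl⟩
    have hy1 := hB hyB
    have hTx : T (psi α n y) = y := T_psi hα T hT hy1
    refine ⟨?_, Set.mem_image_of_mem _ hyA⟩
    rw [← hinv, Set.mem_inter_iff, Set.mem_preimage, hTx]
    exact ⟨JJ_subset_unit hα n (by rw [← psi_image_unit hα]; exact Set.mem_image_of_mem _ hy1),
      hyB⟩

lemma vol_B_cyl (w : List ℕ) :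
    volume (B ∩ cyl α w) = volume (cyl α w) * volume B := by
  induction w with
  | nil =>
    have : B ∩ cyl α [] = B := Set.inter_eq_left.2 hB
    rw [this]
    show volume B = volume (Set.Ioc (0:ℝ) 1) * volume B
    simp [Real.volume_Ioc]
  | cons n w ih =>
    have h1 : B ∩ cyl α (n :: w) = psi α n '' (B ∩ cyl α w) :=
      step_inter hα T hT hB hinv (cyl_subset_unit hα w) n
    have h2 : volume (cyl α (n :: w)) = ENNReal.ofReal (cc α n) * volume (cyl α w) :=
      vol_psi_image hα n _
    rw [h1, vol_psi_image hα, ih, h2, mul_assoc]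

lemma vol_B_open (hBm : MeasurableSet B) {U : Set ℝ} (hU : IsOpen U) :
    volume (B ∩ U) = volume B * volume (U ∩ Set.Ioc 0 1) := by
  classical
  set M : Set (List ℕ) := {w | cyl α w ⊆ U ∧ ∀ v, v <+: w → v ≠ w → ¬ cyl α v ⊆ U} with hM
  have hdisj : M.PairwiseDisjoint (cyl α) := by
    intro w hw v hv hwv
    by_contra hd
    rcases cyl_nested hα hd with h | h
    · exact hv.2 w h hwv hw.1
    · exact hw.2 v h (Ne.symm hwv) hv.1
  have hcover : U ∩ Set.Ioc 0 1 = ⋃ w ∈ M, cyl α w := by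
    apply Set.Subset.antisymm
    · rintro x ⟨hxU, hx01⟩
      obtain ⟨ε, hε, hball⟩ := Metric.isOpen_iff.1 hU x hxU
      have h1 : (1:ℝ) - α⁻¹ < 1 := by
        have : (0:ℝ) < α⁻¹ := by positivity
        linarith
      have h1' : (0:ℝ) ≤ 1 - α⁻¹ := by
        have hi : α⁻¹ < 1 := by rw [inv_lt_one_iff₀]; right; exact hα
        linarith
      obtain ⟨N, hN⟩ := exists_pow_lt_of_lt_one hε h1
      obtain ⟨w, hwl, hwm⟩ := cyl_exists hα hx01 N
      have hcylU : cyl α w ⊆ U := by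
        obtain ⟨a, b, hab, hw, hlen⟩ := cyl_Ioc hα w
        rw [hw] at hwm ⊢
        intro y hy
        apply hball
        rw [Real.ball_eq_Ioo]
        have hblen : b - a < ε := lt_of_le_of_lt (by rw [hwl] at hlen; exact hlen) hN
        exact ⟨by cases hy; cases hwm; linarith, by cases hy; cases hwm; linarith⟩
      -- minimal prefix
      have hP : ∃ k, ∃ v : List ℕ, v <+: w ∧ v.length = k ∧ cyl α v ⊆ U :=
        ⟨w.length, w, List.prefix_refl w, rfl, hcylU⟩
      let k0 := Nat.find hP
      obtain ⟨v, hvw, hvl, hvU⟩ := Nat.find_spec hP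
      have hvM : v ∈ M := by
        refine ⟨hvU, fun u huv hune huU => ?_⟩
        have hul : u.length < k0 := by
          show u.length < k0
          rw [show k0 = v.length from hvl.symm]
          exact lt_of_le_of_ne (List.IsPrefix.length_le huv)
            (fun h => hune (List.IsPrefix.eq_of_length huv h))
        exact Nat.find_min hP hul ⟨u, huv.trans hvw, rfl, huU⟩
      exact Set.mem_biUnion hvM (cyl_mono hα hvw hwm)
    · intro x hx
      simp only [Set.mem_iUnion] at hx
      obtain ⟨w, hwM, hxw⟩ := hx
      exact ⟨hwM.1 hxw, cyl_subset_unit hα w hxw⟩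
  have hBU : B ∩ U = ⋃ w ∈ M, B ∩ cyl α w := by
    have : B ∩ U = B ∩ (U ∩ Set.Ioc 0 1) := by
      ext x
      simp only [Set.mem_inter_iff]
      exact ⟨fun ⟨h1, h2⟩ => ⟨h1, h2, hB h1⟩, fun ⟨h1, h2, _⟩ => ⟨h1, h2⟩⟩
    rw [this, hcover, Set.inter_iUnion₂]
  rw [hBU, hcover]
  have hdisj2 : M.PairwiseDisjoint (fun w => B ∩ cyl α w) := fun w hw v hv hwv =>
    Disjoint.mono Set.inter_subset_right Set.inter_subset_right (hdisj hw hv hwv)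
  rw [measure_biUnion (Set.to_countable M) hdisj2
      (fun w _ => hBm.inter (cyl_measurable hα w)),
    measure_biUnion (Set.to_countable M) hdisj (fun w _ => cyl_measurable hα w),
    ← ENNReal.tsum_mul_left]
  exact tsum_congr fun w => by rw [vol_B_cyl hα T hT hB hinv w, mul_comm]

end

theorem lebesgue_ergodic_under_T (α : ℝ) (hα : 1 < α) (T : ℝ → ℝ)
    (hT : ∀ e : ℕ, 1 ≤ e →
      ∀ x ∈ Set.Ioc (α ^ (-(e : ℤ))) (α ^ (-(e : ℤ) + 1)),
        T x = (α ^ (e : ℤ) * x - 1) / (α - 1)) :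
    (∀ B : Set ℝ, MeasurableSet B → B ⊆ Set.Ioc (0 : ℝ) 1 →
      volume (Set.Ioc (0 : ℝ) 1 ∩ T ⁻¹' B) = volume B) ∧
    (∀ B : Set ℝ, MeasurableSet B → B ⊆ Set.Ioc (0 : ℝ) 1 →
      Set.Ioc (0 : ℝ) 1 ∩ T ⁻¹' B = B → volume B = 0 ∨ volume B = 1) := by
  constructor
  · intro B hBm hB
    exact vol_preimage_eq hα T hT hBm hB
  · intro B hBm hB hinv
    have hvol01 : volume (Set.Ioc (0:ℝ) 1) = 1 := by simp
    have hb_le : volume B ≤ 1 := hvol01 ▸ measure_mono hB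
    have hb_ne_top : volume B ≠ ⊤ := ne_top_of_le_ne_top ENNReal.one_ne_top hb_le
    set C := Set.Ioc (0:ℝ) 1 \ B with hC
    have hCsub : C ⊆ Set.Ioc (0:ℝ) 1 := Set.diff_subset
    have hC_le : volume C ≤ 1 := hvol01 ▸ measure_mono hCsub
    have hC_ne_top : volume C ≠ ⊤ := ne_top_of_le_ne_top ENNReal.one_ne_top hC_le
    have key : volume B * volume C = 0 := by
      rw [← le_zero_iff]
      apply ENNReal.le_of_forall_pos_le_add
      intro ε hε _
      obtain ⟨U, hCU, hUo, hUvol⟩ := Set.exists_isOpen_lt_add C hC_ne_top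
        (show (ε : ENNReal) ≠ 0 by exact_mod_cast ne_of_gt hε)
      have h1 : volume B * volume C ≤ volume B * volume (U ∩ Set.Ioc 0 1) := by
        apply mul_le_mul_right
        exact measure_mono (Set.subset_inter hCU hCsub)
      have h2 : volume B * volume (U ∩ Set.Ioc 0 1) = volume (B ∩ U) :=
        (vol_B_open hα T hT hB hinv hBm hUo).symm
      have h3 : B ∩ U ⊆ (B ∩ C) ∪ (U \ C) := by
        intro x ⟨hxB, hxU⟩
        by_cases hxC : x ∈ C
        · exact Or.inl ⟨hxB, hxC⟩
        · exact Or.inr ⟨hxU, hxC⟩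
      have h4 : B ∩ C = ∅ := by
        rw [hC]
        ext x
        simp only [Set.mem_inter_iff, Set.mem_diff, Set.mem_empty_iff_false]
        tauto
      have h5 : volume (U \ C) ≤ ε := by
        have hCm : MeasurableSet C := measurableSet_Ioc.diff hBm
        rw [measure_diff hCU hCm.nullMeasurableSet hC_ne_top]
        exact tsub_le_iff_left.2 hUvol.le
      calc volume B * volume C ≤ volume (B ∩ U) := h1.trans h2.le
        _ ≤ volume (B ∩ C) + volume (U \ C) :=
          (measure_mono h3).trans (measure_union_le _ _)
        _ ≤ 0 + ε := by rw [h4]; simpa using h5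
    rcases mul_eq_zero.1 key with h | h
    · exact Or.inl h
    · right
      have : volume C = volume (Set.Ioc (0:ℝ) 1) - volume B := by
        rw [hC, measure_diff hB hBm.nullMeasurableSet hb_ne_top]
      rw [this, hvol01] at h
      have : (1:ENNReal) ≤ volume B := tsub_eq_zero_iff_le.1 h
      exact le_antisymm hb_le this
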